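/- Let p be a prime and let v : ι → (Fin n → ZMod p) be a family of vectors that is linearly independent over ZMod p. Then the family of integer vectors obtained by applying the canonical lift ZMod p → {0,1,…,p−1} ⊆ ℤ entrywise, i.e. the family (fun a => fun i => ((v a i).val : ℤ)) : ι → (Fin n → ℤ), is linearly independent over ℤ. -/
import Mathlib


/-- A family of vectors over `ZMod p` that is linearly independent stays linearly
independent over `ℤ` after applying the entrywise canonical lift
`ZMod p → {0, 1, …, p-1} ⊆ ℤ` (the "Gauché" embedding). -/
theorem gauche_lift_linearIndependent (p : ℕ) (hp : p.Prime) (n : ℕ) {ι : Type*}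
    (v : ι → (Fin n → ZMod p)) (hv : LinearIndependent (ZMod p) v) :
    LinearIndependent ℤ (fun a : ι => fun i : Fin n => ((v a i).val : ℤ)) := by
  haveI : Fact p.Prime := ⟨hp⟩
  rw [linearIndependent_iff']
  intro s g hrel i hi
  -- Key: any integer relation over `s` has all coefficients divisible by `p`.
  have key : ∀ g : ι → ℤ,
      (∑ j ∈ s, g j • (fun i : Fin n => ((v j i).val : ℤ))) = 0 →
      ∀ j ∈ s, (p : ℤ) ∣ g j := by
    intro g hg j hj
    have hmod : ∑ j ∈ s, ((g j : ZMod p)) • v j = 0 := by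
      funext i'
      have := congrFun hg i'
      simp only [Finset.sum_apply, Pi.smul_apply, smul_eq_mul, Pi.zero_apply] at this
      have := congrArg (fun z : ℤ => (z : ZMod p)) this
      push_cast at this
      simpa [ZMod.natCast_val, ZMod.intCast_cast, ZMod.cast_id] using this
    have := linearIndependent_iff'.mp hv s (fun j => (g j : ZMod p)) hmod j hj
    exact (ZMod.intCast_zmod_eq_zero_iff_dvd _ _).mp this
  -- Descent on |g i|.
  suffices H : ∀ N : ℕ, ∀ g : ι → ℤ,
      (∑ j ∈ s, g j • (fun i : Fin n => ((v j i).val : ℤ))) = 0 →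
      (g i).natAbs ≤ N → g i = 0 by
    exact H (g i).natAbs g hrel le_rfl
  intro N
  induction N using Nat.strong_induction_on with
  | _ N ih =>
    intro g hg hle
    by_cases h0 : g i = 0
    · exact h0
    · -- divide by p
      set g' : ι → ℤ := fun j => g j / p with hg'
      have hdiv : ∀ j ∈ s, g j = p * g' j := by
        intro j hj
        exact (Int.mul_ediv_cancel' (key g hg j hj)).symm
      have hrel' : (∑ j ∈ s, g' j • (fun i : Fin n => ((v j i).val : ℤ))) = 0 := by
        have hp0 : (p : ℤ) ≠ 0 := by exact_mod_cast hp.ne_zero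
        have : (p : ℤ) • (∑ j ∈ s, g' j • (fun i : Fin n => ((v j i).val : ℤ))) = 0 := by
          rw [Finset.smul_sum]
          rw [← hg]
          apply Finset.sum_congr rfl
          intro j hj
          rw [smul_smul, ← hdiv j hj]
        have := smul_eq_zero.mp this
        rcases this with h | h
        · exact absurd h hp0
        · exact h
      have hlt : (g' i).natAbs < N := by
        have hgi : g i = p * g' i := hdiv i hi
        have hg'0 : g' i ≠ 0 := by
          intro h; apply h0; rw [hgi, h, mul_zero]
        have h2 : 2 ≤ p := hp.two_le
        have : (g i).natAbs = p * (g' i).natAbs := by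
          rw [hgi, Int.natAbs_mul, Int.natAbs_natCast]
        have hlt' : (g' i).natAbs < (g i).natAbs := by
          rw [this]
          have := Int.natAbs_pos.mpr hg'0
          calc (g' i).natAbs = 1 * (g' i).natAbs := (one_mul _).symm
            _ < p * (g' i).natAbs := by
                exact Nat.mul_lt_mul_of_lt_of_le (by omega) le_rfl this
        exact lt_of_lt_of_le hlt' hle
      have := ih (g' i).natAbs hlt g' hrel' le_rfl
      rw [hdiv i hi, this, mul_zero]
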